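/- Let α ≥ 0 be a real number. If the function Ω(x)^α is TN (i.e., the Toeplitz kernel (x,y) ↦ Ω(x−y)^α on ℝ × ℝ is totally non-negative), then α is a non-negative integer. -/

import Mathlib

open Matrix Set Filter

/-- Real power with the convention `0 ^ α := 0` (including `0 ^ 0 := 0`). -/
noncomputable def pow0 (x α : ℝ) : ℝ := if x = 0 then 0 else x ^ α

/-- A kernel `K` is totally non-negative (of all orders) on `X × Y`. -/
def TNKer (X Y : Set ℝ) (K : ℝ → ℝ → ℝ) : Prop :=
  ∀ r : ℕ, 1 ≤ r → ∀ x y : Fin r → ℝ,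
    StrictMono x → StrictMono y → (∀ j, x j ∈ X) → (∀ j, y j ∈ Y) →
      0 ≤ (Matrix.of fun j k => K (x j) (y k)).det

/-- Karlin's kernel `Ω(x) = x e^{-x}` for `x > 0`, else `0`. -/
noncomputable def Omega (x : ℝ) : ℝ := if 0 < x then x * Real.exp (-x) else 0

open Finset Topology

noncomputable section

/-- forward difference operator -/
def dOp (h : ℝ) (f : ℝ → ℝ) : ℝ → ℝ := fun x => f (x + h) - f x

/-- iterated differences along a list of steps -/
def itD : List ℝ → (ℝ → ℝ) → (ℝ → ℝ)
  | [], f => f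
  | h :: t, f => itD t (dOp h f)

lemma itD_append (L₁ L₂ : List ℝ) (f : ℝ → ℝ) :
    itD (L₁ ++ L₂) f = itD L₂ (itD L₁ f) := by
  induction L₁ generalizing f with
  | nil => rfl
  | cons h t ih => simp [itD, ih]

lemma itD_replicate (n : ℕ) (h : ℝ) (f : ℝ → ℝ) :
    itD (List.replicate n h) f = (dOp h)^[n] f := by
  induction n generalizing f with
  | zero => rfl
  | succ n ih => simp [List.replicate_succ, itD, ih, Function.iterate_succ_apply]

/-- expansion of the iterated uniform difference as a signed binomial sum -/
lemma dOp_iter_eq_sum (h : ℝ) (n : ℕ) (f : ℝ → ℝ) (x : ℝ) :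
    (dOp h)^[n] f x
      = ∑ i ∈ Finset.range (n + 1), (-1 : ℝ) ^ (n + i) * (n.choose i) * f (x + i * h) := by
  induction n generalizing f x with
  | zero => simp [dOp]
  | succ n ih =>
    rw [Function.iterate_succ_apply, ih]
    have expand : ∀ i : ℕ, dOp h f (x + i * h) = f (x + (i + 1 : ℕ) * h) - f (x + i * h) := by
      intro i
      have : x + (i : ℝ) * h + h = x + ((i : ℕ) + 1 : ℕ) * h := by push_cast; ring
      simp [dOp, this]
    simp only [expand]
    have hsplit :
        (∑ i ∈ Finset.range (n + 1), (-1 : ℝ) ^ (n + i) * (n.choose i) *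
            (f (x + (i + 1 : ℕ) * h) - f (x + i * h)))
          = (∑ i ∈ Finset.range (n + 1), (-1 : ℝ) ^ (n + i) * (n.choose i) * f (x + (i + 1 : ℕ) * h))
            - ∑ i ∈ Finset.range (n + 1), (-1 : ℝ) ^ (n + i) * (n.choose i) * f (x + i * h) := by
      rw [← Finset.sum_sub_distrib]; congr 1; ext i; ring
    rw [hsplit]
    -- now massage the target
    rw [Finset.sum_range_succ' (fun i => (-1 : ℝ) ^ (n + 1 + i) * ((n+1).choose i) * f (x + i * h)) (n+1)]
    have hps : ∀ i : ℕ, ((n+1).choose (i+1) : ℝ) = (n.choose i : ℝ) + (n.choose (i+1) : ℝ) := by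
      intro i; rw [Nat.choose_succ_succ]; push_cast; ring
    have key : ∑ i ∈ Finset.range (n + 1),
          (-1 : ℝ) ^ (n + 1 + (i + 1)) * ((n+1).choose (i+1)) * f (x + (i + 1 : ℕ) * h)
        = (∑ i ∈ Finset.range (n + 1), (-1 : ℝ) ^ (n + i) * (n.choose i) * f (x + (i + 1 : ℕ) * h))
          + ∑ i ∈ Finset.range (n + 1),
              (-1 : ℝ) ^ (n + i) * (n.choose (i+1)) * f (x + (i + 1 : ℕ) * h) := by
      rw [← Finset.sum_add_distrib]; congr 1; ext i
      rw [hps i]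
      have : (-1 : ℝ) ^ (n + 1 + (i + 1)) = (-1 : ℝ) ^ (n + i) := by
        have : n + 1 + (i + 1) = (n + i) + 2 := by ring
        rw [this, pow_add]; norm_num
      rw [this]; ring
    rw [key]
    have tail : ∑ i ∈ Finset.range (n + 1),
          (-1 : ℝ) ^ (n + i) * (n.choose (i+1)) * f (x + (i + 1 : ℕ) * h)
        = -(∑ i ∈ Finset.range (n + 1), (-1 : ℝ) ^ (n + i) * (n.choose i) * f (x + i * h))
          + (-1 : ℝ) ^ n * (n.choose 0) * f (x + (0 : ℕ) * h) := by
      have h2 : ∑ i ∈ Finset.range (n + 2), (-1 : ℝ) ^ (n + i) * (n.choose i) * f (x + i * h)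
          = (∑ i ∈ Finset.range (n + 1), (-1 : ℝ) ^ (n + (i+1)) * (n.choose (i+1)) * f (x + (i+1 : ℕ) * h))
            + (-1 : ℝ) ^ (n + 0) * (n.choose 0) * f (x + (0:ℕ) * h) :=
        Finset.sum_range_succ' (fun i => (-1 : ℝ) ^ (n + i) * (n.choose i) * f (x + i * h)) (n+1)
      have h3 : ∑ i ∈ Finset.range (n + 2), (-1 : ℝ) ^ (n + i) * (n.choose i) * f (x + i * h)
          = ∑ i ∈ Finset.range (n + 1), (-1 : ℝ) ^ (n + i) * (n.choose i) * f (x + i * h) := by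
        rw [Finset.sum_range_succ]
        simp [Nat.choose_succ_self]
      have h4 : ∀ i : ℕ, (-1 : ℝ) ^ (n + (i+1)) * (n.choose (i+1)) * f (x + (i+1 : ℕ) * h)
          = -((-1 : ℝ) ^ (n + i) * (n.choose (i+1)) * f (x + (i+1 : ℕ) * h)) := by
        intro i
        have : n + (i + 1) = (n + i) + 1 := by ring
        rw [this, pow_succ]; ring
      simp only [h4, Finset.sum_neg_distrib] at h2
      rw [h3] at h2
      simp only [Nat.add_zero] at h2 ⊢
      linarith [h2]
    rw [tail]
    simp only [Nat.choose_zero_right, Nat.cast_one, Nat.cast_zero]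
    push_cast
    ring

/-- Mean value theorem for iterated differences. -/
lemma itD_mvt : ∀ (L : List ℝ) (G : ℕ → ℝ → ℝ) (x : ℝ),
    (∀ m y, |y| ≤ |x| + (L.map abs).sum → HasDerivAt (G m) (G (m+1) y) y) →
    ∃ ξ, |ξ| ≤ |x| + (L.map abs).sum ∧ itD L (G 0) x = L.prod * G L.length ξ := by
  intro L
  induction L with
  | nil =>
    intro G x _
    exact ⟨x, by simp, by simp [itD]⟩
  | cons h t ih =>
    intro G x hG
    set G' : ℕ → ℝ → ℝ := fun m => dOp h (G m) with hG'def
    have habs : ((h :: t).map abs).sum = |h| + (t.map abs).sum := by simp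
    have hsum0 : 0 ≤ (t.map abs).sum := by
      apply List.sum_nonneg; intro a ha
      obtain ⟨b, _, rfl⟩ := List.mem_map.1 ha
      exact abs_nonneg b
    have hG' : ∀ m y, |y| ≤ |x| + (t.map abs).sum → HasDerivAt (G' m) (G' (m+1) y) y := by
      intro m y hy
      have h1 : HasDerivAt (fun z => G m (z + h)) (G (m+1) (y + h)) y := by
        apply HasDerivAt.comp_add_const
        apply hG
        calc |y + h| ≤ |y| + |h| := abs_add_le _ _
          _ ≤ |x| + ((h :: t).map abs).sum := by rw [habs]; linarith
      have h2 : HasDerivAt (G m) (G (m+1) y) y := by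
        apply hG
        rw [habs]; linarith [abs_nonneg h]
      exact h1.sub h2
    obtain ⟨ξ₁, hξ₁, heq₁⟩ := ih G' x hG'
    have hitd : itD (h :: t) (G 0) x = itD t (G' 0) x := rfl
    set n := t.length with hn
    have hbound : ∀ y, |y| ≤ |ξ₁| + |h| → |y| ≤ |x| + ((h :: t).map abs).sum := by
      intro y hy; rw [habs]; linarith
    rcases lt_trichotomy h 0 with hneg | hzero | hpos
    · -- h < 0 : interval [ξ₁ + h, ξ₁]
      have hab : ξ₁ + h < ξ₁ := by linarith
      have hin : ∀ y ∈ Icc (ξ₁ + h) ξ₁, |y| ≤ |ξ₁| + |h| := by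
        intro y hy
        rcases hy with ⟨hy1, hy2⟩
        rw [abs_le]
        refine ⟨?_, ?_⟩
        · have h1 := neg_abs_le ξ₁; have h2 := neg_abs_le h; linarith
        · have h1 := le_abs_self ξ₁; have h2 := abs_nonneg h; linarith
      obtain ⟨c, hc, hceq⟩ := exists_hasDerivAt_eq_slope (G n) (G (n+1)) hab
        (fun y hy => ((hG n y (hbound y (hin y hy))).continuousAt).continuousWithinAt)
        (fun y hy => hG n y (hbound y (hin y (Ioo_subset_Icc_self hy))))
      refine ⟨c, hbound c (hin c (Ioo_subset_Icc_self hc)), ?_⟩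
      rw [hitd, heq₁]
      have hkey : G' n ξ₁ = h * G (n+1) c := by
        have hh : ξ₁ - (ξ₁ + h) = -h := by ring
        have hne : h ≠ 0 := ne_of_lt hneg
        rw [hh] at hceq
        have h2 : (-h) * G (n+1) c = G n ξ₁ - G n (ξ₁ + h) := by
          rw [hceq]; field_simp
        simp only [hG'def, dOp]
        linarith [h2]
      rw [hkey]
      simp only [List.prod_cons, List.length_cons, hn]
      ring
    · -- h = 0
      refine ⟨ξ₁, by rw [habs]; linarith [abs_nonneg h], ?_⟩
      rw [hitd, heq₁]
      have hkey : G' n ξ₁ = 0 := by simp [hG'def, dOp, hzero]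
      rw [hkey]
      simp [List.prod_cons, hzero]
    · -- h > 0 : interval [ξ₁, ξ₁ + h]
      have hab : ξ₁ < ξ₁ + h := by linarith
      have hin : ∀ y ∈ Icc ξ₁ (ξ₁ + h), |y| ≤ |ξ₁| + |h| := by
        intro y hy
        rcases hy with ⟨hy1, hy2⟩
        rw [abs_le]
        refine ⟨?_, ?_⟩
        · have h1 := neg_abs_le ξ₁; have h2 := abs_nonneg h; linarith
        · have h1 := le_abs_self ξ₁; have h2 := le_abs_self h; linarith
      obtain ⟨c, hc, hceq⟩ := exists_hasDerivAt_eq_slope (G n) (G (n+1)) hab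
        (fun y hy => ((hG n y (hbound y (hin y hy))).continuousAt).continuousWithinAt)
        (fun y hy => hG n y (hbound y (hin y (Ioo_subset_Icc_self hy))))
      refine ⟨c, hbound c (hin c (Ioo_subset_Icc_self hc)), ?_⟩
      rw [hitd, heq₁]
      have hkey : G' n ξ₁ = h * G (n+1) c := by
        have hh : ξ₁ + h - ξ₁ = h := by ring
        have hne : h ≠ 0 := ne_of_gt hpos
        rw [hh] at hceq
        have h2 : h * G (n+1) c = G n (ξ₁ + h) - G n ξ₁ := by
          rw [hceq]; field_simp
        simp only [hG'def, dOp]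
        linarith [h2]
      rw [hkey]
      simp only [List.prod_cons, List.length_cons, hn]
      ring

/-- falling-factorial products -/
def ffp (α : ℝ) (m : ℕ) : ℝ := ∏ i ∈ Finset.range m, (α - i)

/-- the family of derivatives of `x ↦ (2+x)^α` -/
def Fam (α : ℝ) (m : ℕ) : ℝ → ℝ := fun x => ffp α m * (2 + x) ^ (α - m)

lemma Fam_hasDerivAt (α : ℝ) (m : ℕ) (y : ℝ) (hy : -2 < y) :
    HasDerivAt (Fam α m) (Fam α (m+1) y) y := by
  have h2y : (2 : ℝ) + y ≠ 0 := by linarith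
  have h1 : HasDerivAt (fun x : ℝ => x ^ (α - m)) ((α - m) * (2 + y) ^ (α - m - 1)) (2 + y) :=
    Real.hasDerivAt_rpow_const (Or.inl h2y)
  have h2 : HasDerivAt (fun x : ℝ => (2 + x) ^ (α - m)) ((α - m) * (2 + y) ^ (α - m - 1)) y :=
    h1.comp_const_add 2 y
  have h3 := h2.const_mul (ffp α m)
  have h4 : HasDerivAt (Fam α m) (ffp α m * ((α - m) * (2 + y) ^ (α - m - 1))) y := h3
  convert h4 using 1
  show ffp α (m+1) * (2 + y) ^ (α - (m+1 : ℕ)) = _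
  rw [ffp, Finset.prod_range_succ, ← ffp]
  have : α - ((m : ℝ) + 1) = α - m - 1 := by ring
  push_cast
  rw [this]
  ring

lemma Fam_continuousAt (α : ℝ) (m : ℕ) : ContinuousAt (Fam α m) 0 := by
  have h1 : ContinuousAt (fun x : ℝ => x ^ (α - m)) ((fun x : ℝ => 2 + x) 0) := by
    apply Real.continuousAt_rpow_const
    left; norm_num
  exact (h1.comp (by fun_prop)).const_smul (ffp α m) |>.congr (by
    filter_upwards with x; rfl) |>.congr (by filter_upwards with x; rfl)

lemma pow0_Omega_pos (α v : ℝ) (hv : 0 < v) :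
    pow0 (Omega v) α = v ^ α * Real.exp (-(α * v)) := by
  have hO : Omega v = v * Real.exp (-v) := if_pos hv
  have hOpos : 0 < Omega v := by rw [hO]; positivity
  rw [pow0, if_neg (ne_of_gt hOpos), hO]
  rw [Real.mul_rpow hv.le (Real.exp_pos _).le]
  congr 1
  rw [Real.rpow_def_of_pos (Real.exp_pos _), Real.log_exp]
  ring_nf

/-- the matrix of sampled kernel values after removing the exponential factors -/
def Amat (α : ℝ) (r : ℕ) (ε : ℝ) : Matrix (Fin r) (Fin r) ℝ :=
  Matrix.of fun j k => Fam α 0 ((j : ℝ) * ε - (k : ℝ) * ε)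

lemma detA_nonneg (α : ℝ)
    (h : TNKer Set.univ Set.univ (fun x y => pow0 (Omega (x - y)) α))
    (r : ℕ) (hr : 1 ≤ r) (ε : ℝ) (hε : 0 < ε) (hε2 : (r : ℝ) * ε < 1) :
    0 ≤ (Amat α r ε).det := by
  set x : Fin r → ℝ := fun j => 2 + (j : ℝ) * ε with hxdef
  set y : Fin r → ℝ := fun k => (k : ℝ) * ε with hydef
  have hx : StrictMono x := by
    intro a b hab
    have : (a : ℝ) < (b : ℝ) := by exact_mod_cast hab
    simp only [hxdef]
    have := mul_lt_mul_of_pos_right this hε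
    linarith
  have hy : StrictMono y := by
    intro a b hab
    have : (a : ℝ) < (b : ℝ) := by exact_mod_cast hab
    simp only [hydef]
    exact mul_lt_mul_of_pos_right this hε
  have hdet := h r hr x y hx hy (fun _ => Set.mem_univ _) (fun _ => Set.mem_univ _)
  have hvpos : ∀ j k : Fin r, 0 < x j - y k := by
    intro j k
    have hj : (0 : ℝ) ≤ (j : ℝ) * ε := by positivity
    have hk : (k : ℝ) * ε < 1 := by
      have : (k : ℝ) < r := by exact_mod_cast k.2
      nlinarith
    simp only [hxdef, hydef]
    linarith
  set d₁ : Fin r → ℝ := fun j => Real.exp (-(α * x j)) with hd1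
  set d₂ : Fin r → ℝ := fun k => Real.exp (α * y k) with hd2
  have hKeq : (Matrix.of fun j k => pow0 (Omega (x j - y k)) α)
      = Matrix.diagonal d₁ * (Amat α r ε * Matrix.diagonal d₂) := by
    ext j k
    rw [Matrix.diagonal_mul, Matrix.mul_diagonal]
    rw [Matrix.of_apply, pow0_Omega_pos α _ (hvpos j k)]
    have hexp : Real.exp (-(α * (x j - y k))) = d₁ j * d₂ k := by
      rw [hd1, hd2, ← Real.exp_add]
      congr 1
      ring
    have hA : Amat α r ε j k = (x j - y k) ^ α := by
      rw [Amat, Matrix.of_apply, Fam, ffp, Finset.prod_range_zero, one_mul]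
      have h1 : (2 : ℝ) + ((j : ℝ) * ε - (k : ℝ) * ε) = x j - y k := by
        simp only [hxdef, hydef]; ring
      have h2 : α - ((0 : ℕ) : ℝ) = α := by norm_num
      rw [h1, h2]
    rw [hA, hexp]
    ring
  rw [hKeq, Matrix.det_mul, Matrix.det_mul, Matrix.det_diagonal, Matrix.det_diagonal] at hdet
  have hp1 : 0 < ∏ j, d₁ j := Finset.prod_pos fun j _ => Real.exp_pos _
  have hp2 : 0 < ∏ k, d₂ k := Finset.prod_pos fun k _ => Real.exp_pos _
  nlinarith [hdet, mul_pos hp1 hp2]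

/-- lower-triangular signed Pascal matrix -/
def Pm (r : ℕ) : Matrix (Fin r) (Fin r) ℝ :=
  Matrix.of fun j i => (-1 : ℝ) ^ ((j : ℕ) + (i : ℕ)) * ((j : ℕ).choose (i : ℕ))

/-- upper-triangular signed Pascal matrix -/
def Qm (r : ℕ) : Matrix (Fin r) (Fin r) ℝ :=
  Matrix.of fun l k => (-1 : ℝ) ^ ((k : ℕ) + (l : ℕ)) * ((k : ℕ).choose (l : ℕ))

lemma det_Pm (r : ℕ) : (Pm r).det = 1 := by
  have htri : (Pm r).BlockTriangular OrderDual.toDual := by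
    intro i j hij
    have hlt : (i : ℕ) < (j : ℕ) := (show i < j from hij)
    simp [Pm, Nat.choose_eq_zero_of_lt hlt]
  rw [Matrix.det_of_lowerTriangular (Pm r) htri]
  rw [Finset.prod_eq_one]
  intro j _
  simp [Pm, pow_add, ← mul_pow]

lemma det_Qm (r : ℕ) : (Qm r).det = 1 := by
  have htri : (Qm r).BlockTriangular id := by
    intro i j hij
    have hlt : (j : ℕ) < (i : ℕ) := (show (j : Fin r) < i from hij)
    simp [Qm, Nat.choose_eq_zero_of_lt hlt]
  rw [Matrix.det_of_upperTriangular htri]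
  rw [Finset.prod_eq_one]
  intro j _
  simp [Qm, pow_add, ← mul_pow]

lemma B_entry (α : ℝ) (r : ℕ) (ε : ℝ) (j k : Fin r) :
    (Pm r * Amat α r ε * Qm r) j k
      = (dOp ε)^[(j : ℕ)] ((dOp (-ε))^[(k : ℕ)] (Fam α 0)) 0 := by
  set F : ℕ → ℕ → ℝ := fun i l =>
    ((-1 : ℝ) ^ ((j : ℕ) + i) * ((j : ℕ).choose i))
      * (((-1 : ℝ) ^ ((k : ℕ) + l) * ((k : ℕ).choose l))
        * Fam α 0 ((i : ℝ) * ε - (l : ℝ) * ε)) with hF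
  -- RHS expansion
  have hin : ∀ i : ℕ, (dOp (-ε))^[(k : ℕ)] (Fam α 0) ((i : ℝ) * ε)
      = ∑ l ∈ Finset.range ((k : ℕ) + 1),
          (-1 : ℝ) ^ ((k : ℕ) + l) * ((k : ℕ).choose l) * Fam α 0 ((i : ℝ) * ε - (l : ℝ) * ε) := by
    intro i
    rw [dOp_iter_eq_sum]
    refine Finset.sum_congr rfl fun l _ => ?_
    congr 2
    ring
  have hout : (dOp ε)^[(j : ℕ)] ((dOp (-ε))^[(k : ℕ)] (Fam α 0)) 0
      = ∑ i ∈ Finset.range ((j : ℕ) + 1), ∑ l ∈ Finset.range ((k : ℕ) + 1), F i l := by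
    rw [dOp_iter_eq_sum]
    refine Finset.sum_congr rfl fun i _ => ?_
    have h0 : (0 : ℝ) + (i : ℝ) * ε = (i : ℝ) * ε := by ring
    rw [h0, hin i, Finset.mul_sum]
  rw [hout]
  -- LHS expansion
  have hLHS : (Pm r * Amat α r ε * Qm r) j k = ∑ i : Fin r, ∑ l : Fin r, F (i : ℕ) (l : ℕ) := by
    rw [Matrix.mul_apply]
    rw [Finset.sum_congr rfl (fun l _ => by rw [Matrix.mul_apply, Finset.sum_mul])]
    rw [Finset.sum_comm]
    refine Finset.sum_congr rfl fun i _ => ?_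
    refine Finset.sum_congr rfl fun l _ => ?_
    simp only [Pm, Qm, Amat, Matrix.of_apply, Fam, hF]
    ring
  rw [hLHS]
  have hfin : ∀ (f : ℕ → ℝ), (∑ i : Fin r, f (i : ℕ)) = ∑ i ∈ Finset.range r, f i :=
    fun f => Fin.sum_univ_eq_sum_range f r
  calc ∑ i : Fin r, ∑ l : Fin r, F (i : ℕ) (l : ℕ)
      = ∑ i : Fin r, ∑ l ∈ Finset.range r, F (i : ℕ) l :=
        Finset.sum_congr rfl fun i _ => hfin (F (i : ℕ))
    _ = ∑ i ∈ Finset.range r, ∑ l ∈ Finset.range r, F i l :=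
        hfin (fun i => ∑ l ∈ Finset.range r, F i l)
    _ = ∑ i ∈ Finset.range r, ∑ l ∈ Finset.range ((k : ℕ) + 1), F i l := by
        refine Finset.sum_congr rfl fun i _ => ?_
        refine (Finset.sum_subset (Finset.range_subset_range.2 k.2) fun l _ hl => ?_).symm
        have hkl : (k : ℕ) < l := by
          by_contra hcon
          exact hl (Finset.mem_range.2 (Nat.lt_succ_of_le (le_of_not_gt hcon)))
        simp [hF, Nat.choose_eq_zero_of_lt hkl]
    _ = ∑ i ∈ Finset.range ((j : ℕ) + 1), ∑ l ∈ Finset.range ((k : ℕ) + 1), F i l := by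
        refine (Finset.sum_subset (Finset.range_subset_range.2 j.2) fun i _ hi => ?_).symm
        have hji : (j : ℕ) < i := by
          by_contra hcon
          exact hi (Finset.mem_range.2 (Nat.lt_succ_of_le (le_of_not_gt hcon)))
        refine Finset.sum_eq_zero fun l _ => ?_
        simp [hF, Nat.choose_eq_zero_of_lt hji]

open Polynomial in
lemma detM0 (α : ℝ) (r : ℕ) :
    ∃ c : ℝ, 0 < c ∧
      (Matrix.of fun j k : Fin r => Fam α ((j : ℕ) + (k : ℕ)) 0).det
        = (-1 : ℝ) ^ (∑ k : Fin r, (k : ℕ)) * (c * ∏ j ∈ Finset.range r, ffp α j) := by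
  set p : Fin r → ℝ[X] := fun k => ∏ i ∈ Finset.range (k : ℕ), (X - C (α - i)) with hp
  have hmonic : ∀ k, (p k).Monic :=
    fun k => monic_prod_of_monic _ _ fun i _ => monic_X_sub_C _
  have hdeg : ∀ k : Fin r, (p k).natDegree = (k : ℕ) := by
    intro k
    rw [hp]
    rw [natDegree_prod_of_monic _ _ fun i _ => monic_X_sub_C _]
    simp only [natDegree_X_sub_C]
    simp
  set V : Matrix (Fin r) (Fin r) ℝ :=
    Matrix.of fun j k => (p k).eval ((j : ℕ) : ℝ) with hV
  set d₁ : Fin r → ℝ := fun j => ffp α (j : ℕ) * (2 : ℝ) ^ (α - (j : ℕ)) with hd1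
  set d₂ : Fin r → ℝ := fun k => (-1 : ℝ) ^ (k : ℕ) * (2 : ℝ) ^ (-((k : ℕ) : ℝ)) with hd2
  have hM0 : (Matrix.of fun j k : Fin r => Fam α ((j : ℕ) + (k : ℕ)) 0)
      = Matrix.diagonal d₁ * (V * Matrix.diagonal d₂) := by
    ext j k
    rw [Matrix.diagonal_mul, Matrix.mul_diagonal, Matrix.of_apply]
    have heval : (p k).eval ((j : ℕ) : ℝ)
        = ∏ i ∈ Finset.range (k : ℕ), (((j : ℕ) : ℝ) - (α - i)) := by
      rw [hp, eval_prod]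
      refine Finset.prod_congr rfl fun i _ => ?_
      simp
    have hsign : (-1 : ℝ) ^ (k : ℕ) * (p k).eval ((j : ℕ) : ℝ)
        = ∏ i ∈ Finset.range (k : ℕ), (α - ((j : ℕ) + i : ℕ)) := by
      rw [heval]
      calc (-1 : ℝ) ^ (k : ℕ) * ∏ i ∈ Finset.range (k : ℕ), (((j : ℕ) : ℝ) - (α - i))
          = ∏ i ∈ Finset.range (k : ℕ), ((-1 : ℝ) * (((j : ℕ) : ℝ) - (α - i))) := by
            rw [Finset.prod_mul_distrib, Finset.prod_const, Finset.card_range]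
        _ = ∏ i ∈ Finset.range (k : ℕ), (α - ((j : ℕ) + i : ℕ)) := by
            refine Finset.prod_congr rfl fun i _ => ?_
            push_cast
            ring
    have hffp : ffp α ((j : ℕ) + (k : ℕ)) = ffp α (j : ℕ) *
        ∏ i ∈ Finset.range (k : ℕ), (α - ((j : ℕ) + i : ℕ)) := by
      rw [ffp, Finset.prod_range_add, ← ffp]
    have hrpow : (2 : ℝ) ^ (α - (j : ℕ)) * (2 : ℝ) ^ (-((k : ℕ) : ℝ))
        = (2 : ℝ) ^ (α - (((j : ℕ) + (k : ℕ) : ℕ) : ℝ)) := by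
      rw [← Real.rpow_add two_pos]
      congr 1
      push_cast
      ring
    rw [Fam]
    rw [hffp, ← hsign]
    rw [show (2 : ℝ) + 0 = 2 by norm_num]
    rw [← hrpow]
    simp only [hV, Matrix.of_apply]
    ring
  rw [hM0, Matrix.det_mul, Matrix.det_mul, Matrix.det_diagonal, Matrix.det_diagonal]
  have hdetV : V.det = (Matrix.vandermonde fun j : Fin r => ((j : ℕ) : ℝ)).det := by
    rw [Matrix.det_eval_matrixOfPolynomials_eq_det_vandermonde _ p hdeg hmonic]
  have hVpos : 0 < V.det := by
    rw [hdetV, Matrix.det_vandermonde]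
    refine Finset.prod_pos fun i _ => Finset.prod_pos fun j hj => ?_
    have hij : i < j := Finset.mem_Ioi.1 hj
    have : (i : ℕ) < (j : ℕ) := hij
    have : ((i : ℕ) : ℝ) < ((j : ℕ) : ℝ) := by exact_mod_cast this
    linarith
  have hd1prod : ∏ j, d₁ j
      = (∏ j ∈ Finset.range r, ffp α j) * ∏ j : Fin r, (2 : ℝ) ^ (α - (j : ℕ)) := by
    rw [hd1, Finset.prod_mul_distrib]
    congr 1
    exact Fin.prod_univ_eq_prod_range (fun j => ffp α j) r
  have hd2prod : ∏ k, d₂ k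
      = (-1 : ℝ) ^ (∑ k : Fin r, (k : ℕ)) * ∏ k : Fin r, (2 : ℝ) ^ (-((k : ℕ) : ℝ)) := by
    rw [hd2, Finset.prod_mul_distrib]
    congr 1
    rw [Finset.prod_pow_eq_pow_sum]
  have hP1 : 0 < ∏ j : Fin r, (2 : ℝ) ^ (α - (j : ℕ)) :=
    Finset.prod_pos fun j _ => Real.rpow_pos_of_pos two_pos _
  have hP2 : 0 < ∏ k : Fin r, (2 : ℝ) ^ (-((k : ℕ) : ℝ)) :=
    Finset.prod_pos fun k _ => Real.rpow_pos_of_pos two_pos _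
  refine ⟨(∏ j : Fin r, (2 : ℝ) ^ (α - (j : ℕ))) * V.det *
      ∏ k : Fin r, (2 : ℝ) ^ (-((k : ℕ) : ℝ)), by positivity, ?_⟩
  rw [hd1prod, hd2prod]
  ring

end

theorem stmt4 (α : ℝ) (hα : 0 ≤ α)
    (h : TNKer Set.univ Set.univ (fun x y => pow0 (Omega (x - y)) α)) :
    ∃ n : ℕ, α = n := by
  by_contra hne
  push_neg at hne
  set m := ⌊α⌋₊ with hm
  have hmlt : (m : ℝ) < α := lt_of_le_of_ne (Nat.floor_le hα) fun hcon => hne m hcon.symm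
  have hup : α < m + 1 := Nat.lt_floor_add_one α
  set r := m + 3 with hrdef
  have hr1 : 1 ≤ r := by omega
  have hrpos : (0 : ℝ) < r := by positivity
  -- the product of falling factorials is negative
  have hprodneg : ∏ j ∈ Finset.range r, ffp α j < 0 := by
    have hposj : ∀ j, j ≤ m + 1 → 0 < ffp α j := by
      intro j hj
      refine Finset.prod_pos fun i hi => ?_
      have hi1 : i < j := Finset.mem_range.1 hi
      have : (i : ℝ) ≤ m := by exact_mod_cast Nat.le_of_lt_succ (lt_of_lt_of_le hi1 hj)
      linarith
    have hneg2 : ffp α (m + 2) < 0 := by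
      have : ffp α (m + 2) = ffp α (m + 1) * (α - (m + 1 : ℕ)) := by
        rw [ffp, Finset.prod_range_succ, ← ffp]
      rw [this]
      apply mul_neg_of_pos_of_neg (hposj (m+1) le_rfl)
      push_cast
      linarith
    have hsplit : ∏ j ∈ Finset.range r, ffp α j
        = (∏ j ∈ Finset.range (m + 2), ffp α j) * ffp α (m + 2) := by
      rw [hrdef, Finset.prod_range_succ]
    rw [hsplit]
    exact mul_neg_of_pos_of_neg
      (Finset.prod_pos fun j hj => hposj j (Nat.le_of_lt_succ (Finset.mem_range.1 hj))) hneg2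
  -- the analytic part: the product is non-negative
  set s := ∑ k : Fin r, (k : ℕ) with hs
  set ε : ℕ → ℝ := fun n => 1 / ((2 * r) * (n + 1)) with hε
  have hεpos : ∀ n, 0 < ε n := by
    intro n
    rw [hε]
    positivity
  have hεval : ∀ n, 2 * (r : ℝ) * ε n = 1 / (n + 1) := by
    intro n
    rw [hε]
    field_simp
  have hεsmall : ∀ n, (r : ℝ) * ε n < 1 := by
    intro n
    rw [hε, mul_one_div, div_lt_one (by positivity)]
    have hn0 : (0 : ℝ) ≤ (n : ℝ) := Nat.cast_nonneg n
    nlinarith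
  -- existence of mean-value representations for the transformed matrix entries
  have hex : ∀ (n : ℕ) (j k : Fin r), ∃ ξ : ℝ, |ξ| ≤ 2 * (r : ℝ) * ε n ∧
      (Pm r * Amat α r (ε n) * Qm r) j k
        = (ε n) ^ (j : ℕ) * (-(ε n)) ^ (k : ℕ) * Fam α ((j : ℕ) + (k : ℕ)) ξ := by
    intro n j k
    set L : List ℝ := List.replicate (k : ℕ) (-(ε n)) ++ List.replicate (j : ℕ) (ε n) with hL
    have habs : (L.map abs).sum = ((k : ℕ) + (j : ℕ)) * ε n := by
      rw [hL, List.map_append, List.sum_append, List.map_replicate, List.map_replicate,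
        List.sum_replicate, List.sum_replicate, abs_neg, abs_of_pos (hεpos n)]
      push_cast
      rw [nsmul_eq_mul, nsmul_eq_mul]
      ring
    have hsumle : ((k : ℕ) + (j : ℕ) : ℝ) * ε n ≤ 2 * (r : ℝ) * ε n := by
      have hk : ((k : ℕ) : ℝ) < r := by exact_mod_cast k.2
      have hj : ((j : ℕ) : ℝ) < r := by exact_mod_cast j.2
      have := (hεpos n).le
      nlinarith
    have hsum1 : (L.map abs).sum ≤ 1 := by
      rw [habs]
      refine le_trans hsumle ?_
      rw [hεval n]
      rw [div_le_one (by positivity)]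
      have : (0 : ℝ) ≤ (n : ℝ) := Nat.cast_nonneg n
      linarith
    have hG : ∀ (m' : ℕ) (y : ℝ), |y| ≤ |(0 : ℝ)| + (L.map abs).sum →
        HasDerivAt (Fam α m') (Fam α (m' + 1) y) y := by
      intro m' y hy
      apply Fam_hasDerivAt
      rw [abs_zero, zero_add] at hy
      have := neg_abs_le y
      have := abs_nonneg y
      linarith [hsum1]
    obtain ⟨ξ, hξ1, hξ2⟩ := itD_mvt L (Fam α) 0 hG
    refine ⟨ξ, ?_, ?_⟩
    · rw [abs_zero, zero_add, habs] at hξ1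
      linarith [hsumle]
    · rw [B_entry]
      have hrepr : itD L (Fam α 0) = (dOp (ε n))^[(j : ℕ)] ((dOp (-(ε n)))^[(k : ℕ)] (Fam α 0)) := by
        rw [hL, itD_append, itD_replicate, itD_replicate]
      rw [← hrepr, hξ2]
      have hprod : L.prod = (-(ε n)) ^ (k : ℕ) * (ε n) ^ (j : ℕ) := by
        rw [hL, List.prod_append, List.prod_replicate, List.prod_replicate]
      have hlen : L.length = (j : ℕ) + (k : ℕ) := by
        rw [hL, List.length_append, List.length_replicate, List.length_replicate]
        omega
      rw [hprod, hlen]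
      ring
  choose ξf hξbd hξeq using hex
  set N : ℕ → Matrix (Fin r) (Fin r) ℝ :=
    fun n => Matrix.of fun j k => Fam α ((j : ℕ) + (k : ℕ)) (ξf n j k) with hN
  have hNdet : ∀ n, 0 ≤ (-1 : ℝ) ^ s * (N n).det := by
    intro n
    have hA := detA_nonneg α h r hr1 (ε n) (hεpos n) (hεsmall n)
    have hdetB : (Pm r * Amat α r (ε n) * Qm r).det = (Amat α r (ε n)).det := by
      rw [Matrix.det_mul, Matrix.det_mul, det_Pm, det_Qm]
      ring
    have hfact : Pm r * Amat α r (ε n) * Qm r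
        = Matrix.diagonal (fun j : Fin r => (ε n) ^ (j : ℕ))
          * (N n * Matrix.diagonal (fun k : Fin r => (-(ε n)) ^ (k : ℕ))) := by
      ext j k
      rw [Matrix.diagonal_mul, Matrix.mul_diagonal, hξeq n j k]
      rw [hN]
      simp only [Matrix.of_apply]
      ring
    have hdet2 : (Amat α r (ε n)).det
        = ((ε n) ^ s * (-(ε n)) ^ s) * (N n).det := by
      rw [← hdetB, hfact, Matrix.det_mul, Matrix.det_mul,
        Matrix.det_diagonal, Matrix.det_diagonal]
      rw [Finset.prod_pow_eq_pow_sum, Finset.prod_pow_eq_pow_sum]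
      ring
    rw [hdet2] at hA
    have hneg : (-(ε n)) ^ s = (-1 : ℝ) ^ s * (ε n) ^ s := by
      rw [neg_pow]
    rw [hneg] at hA
    have hεs : (0 : ℝ) < (ε n) ^ s * (ε n) ^ s := by positivity
    nlinarith [hA, hεs]
  -- pass to the limit
  have hξto : ∀ (j k : Fin r), Tendsto (fun n => ξf n j k) atTop (𝓝 0) := by
    intro j k
    have hb : ∀ n, ‖ξf n j k‖ ≤ 1 / ((n : ℝ) + 1) := by
      intro n
      rw [Real.norm_eq_abs]
      exact (hξbd n j k).trans (le_of_eq (hεval n))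
    exact squeeze_zero_norm hb tendsto_one_div_add_atTop_nhds_zero_nat
  set M0 : Matrix (Fin r) (Fin r) ℝ := Matrix.of fun j k => Fam α ((j : ℕ) + (k : ℕ)) 0 with hM0
  have hNto : Tendsto (fun n => (N n).det) atTop (𝓝 M0.det) := by
    simp only [Matrix.det_apply']
    apply tendsto_finset_sum
    intro σ _
    apply Tendsto.const_mul
    apply tendsto_finset_prod
    intro i _
    have hc := (Fam_continuousAt α (((σ i : Fin r) : ℕ) + (i : ℕ))).tendsto
    have hcomp := hc.comp (hξto (σ i) i)
    simpa [hN, hM0, Function.comp_def] using hcomp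
  have hfinal : 0 ≤ (-1 : ℝ) ^ s * M0.det :=
    ge_of_tendsto (hNto.const_mul ((-1 : ℝ) ^ s)) (Filter.Eventually.of_forall hNdet)
  obtain ⟨c, hcpos, hceq⟩ := detM0 α r
  rw [hM0] at hfinal
  rw [hceq] at hfinal
  have h11 : (-1 : ℝ) ^ s * (-1 : ℝ) ^ s = 1 := by
    rw [← pow_add]
    exact Even.neg_one_pow ⟨s, rfl⟩
  rw [← mul_assoc, h11, one_mul] at hfinal
  linarith [mul_neg_of_pos_of_neg hcpos hprodneg]
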